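/- If F : [2^(db)] → ℕ is a function such that there exist 2^(db−1) pairwise disjoint pairs {x, y} where x and y differ in exactly one bit (of the db-bit representation), x < y, and F(x) > F(y), then the function F viewed as a function on the hypergrid [2^b]^d (via splitting the db bits into d groups of b bits, each group read as a coordinate) is 1/2-far from monotone with respect to the coordinatewise partial order on [2^b]^d. -/

import Mathlib

/-- The `i`-th coordinate (most significant group first) of `x ∈ [2^(db)]`
viewed as a point of the hypergrid `[2^b]^d`, by splitting the `db` bits of
`x` into `d` groups of `b` bits. -/
def toGrid (d b x : ℕ) (i : Fin d) : ℕ := x / 2 ^ (b * (d - 1 - (i : ℕ))) % 2 ^ b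

/-- Bitwise domination implies coordinatewise domination on the grid. -/
lemma toGrid_mono (d b x y : ℕ)
    (hbit : ∀ m, x.testBit m = true → y.testBit m = true) (i : Fin d) :
    toGrid d b x i ≤ toGrid d b y i := by
  set k := b * (d - 1 - (i : ℕ)) with hk
  have key : toGrid d b x i &&& toGrid d b y i = toGrid d b x i := by
    apply Nat.eq_of_testBit_eq
    intro m
    simp only [Nat.testBit_and, toGrid, ← Nat.shiftRight_eq_div_pow,
      Nat.testBit_mod_two_pow, Nat.testBit_shiftRight]
    cases hm : decide (m < b) with
    | false => simp
    | true =>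
      simp only [Bool.true_and]
      cases hx : x.testBit (k + m) with
      | false => simp
      | true => simp [hbit _ hx]; exact hbit _ hx
  calc toGrid d b x i = toGrid d b x i &&& toGrid d b y i := key.symm
    _ ≤ toGrid d b y i := Nat.and_le_right

/-- If `x < y` and `x ^^^ y = 2^j`, then every bit of `x` is a bit of `y`. -/
lemma bits_subset_of_xor_pow (x y j : ℕ) (hxy : x < y) (hx : x ^^^ y = 2 ^ j) :
    ∀ m, x.testBit m = true → y.testBit m = true := by
  have hne : ∀ m, m ≠ j → x.testBit m = y.testBit m := by
    intro m hm
    have := congrArg (fun z => z.testBit m) hx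
    simp only [Nat.testBit_xor, Nat.testBit_two_pow] at this
    rw [decide_eq_false (Ne.symm hm)] at this
    cases hx' : x.testBit m <;> cases hy' : y.testBit m <;>
      simp [hx', hy'] at this ⊢
  intro m hxm
  by_cases hmj : m = j
  · -- if x.testBit j = true and y.testBit j = false then y < x, contradiction
    subst hmj
    by_contra hy
    have hyf : y.testBit m = false := by
      cases h : y.testBit m
      · rfl
      · exact absurd h hy
    have : y < x := by
      apply Nat.lt_of_testBit m hyf hxm
      intro l hl
      exact (hne l (by omega)).symm
    omega
  · rw [← hne m hmj]; exact hxm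

theorem stmt18 (d b : ℕ) (hd : 0 < d) (hb : 0 < b) (F : ℕ → ℕ)
    (P : Finset (ℕ × ℕ)) (hcard : P.card = 2 ^ (d * b - 1))
    (hP : ∀ p ∈ P, p.1 < p.2 ∧ p.2 < 2 ^ (d * b) ∧
      (∃ j < d * b, p.1 ^^^ p.2 = 2 ^ j) ∧ F p.2 < F p.1)
    (hdisj : ∀ p ∈ P, ∀ q ∈ P, p ≠ q → ({p.1, p.2} : Set ℕ) ∩ {q.1, q.2} = ∅) :
    ∀ h : ℕ → ℕ,
      (∀ x y, x < 2 ^ (d * b) → y < 2 ^ (d * b) →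
        (∀ i : Fin d, toGrid d b x i ≤ toGrid d b y i) → h x ≤ h y) →
      2 ^ (d * b - 1) ≤
        ((Finset.range (2 ^ (d * b))).filter (fun x => F x ≠ h x)).card := by
  intro h hmono
  rw [← hcard]
  set T := (Finset.range (2 ^ (d * b))).filter (fun x => F x ≠ h x) with hT
  -- witness function
  set w : ℕ × ℕ → ℕ := fun p => if F p.1 ≠ h p.1 then p.1 else p.2 with hw
  have hwmem : ∀ p ∈ P, w p ∈ T := by
    intro p hp
    obtain ⟨hlt, hub, ⟨j, hj, hxor⟩, hF⟩ := hP p hp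
    have h1ub : p.1 < 2 ^ (d * b) := lt_trans hlt hub
    have hle : h p.1 ≤ h p.2 := by
      apply hmono _ _ h1ub hub
      exact toGrid_mono d b p.1 p.2 (bits_subset_of_xor_pow _ _ j hlt hxor)
    by_cases h1 : F p.1 ≠ h p.1
    · simp only [hw, if_pos h1, hT]
      exact Finset.mem_filter.mpr ⟨Finset.mem_range.mpr h1ub, h1⟩
    · push_neg at h1
      have h2 : F p.2 ≠ h p.2 := by
        intro h2
        rw [← h1, ← h2] at hle
        omega
      have hwp : w p = p.2 := by simp [hw, h1]
      rw [hwp]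
      exact Finset.mem_filter.mpr ⟨Finset.mem_range.mpr hub, h2⟩
  have hwfst : ∀ p : ℕ × ℕ, w p = p.1 ∨ w p = p.2 := by
    intro p
    by_cases h1 : F p.1 ≠ h p.1 <;> simp [hw, h1]
  apply Finset.card_le_card_of_injOn w hwmem
  intro p hp q hq hpq
  by_contra hne
  have := hdisj p hp q hq hne
  have hwp : w p ∈ ({p.1, p.2} : Set ℕ) := by
    rcases hwfst p with h' | h' <;> simp [h']
  have hwq : w q ∈ ({q.1, q.2} : Set ℕ) := by
    rcases hwfst q with h' | h' <;> simp [h']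
  have : w p ∈ ({p.1, p.2} : Set ℕ) ∩ {q.1, q.2} := ⟨hwp, hpq ▸ hwq⟩
  rw [hdisj p hp q hq hne] at this
  exact this
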